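/- Let q be a Lie algebra over a field k and V a module over q. Fix v ∈ V, let q_v = {z ∈ q : z·v = 0} be its stabilizer and U = {w ∈ V : z·w = 0 for all z ∈ q_v} the fixed-point space of q_v. Suppose y ∈ U satisfies q_y = q_v. Then (q·y) ∩ U = n_q(q_v)·y, i.e. {z·y : z ∈ q} ∩ U = {z·y : z ∈ n_q(q_v)}. -/
import Mathlib

/-- Let `q` be a Lie algebra over a field `k` and `V` a `q`-module.
Fix `v ∈ V`, let `q_v = {z : z·v = 0}` be its stabiliser and
`U = {w : z·w = 0 for all z ∈ q_v}` the fixed-point space of `q_v`.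
If `y ∈ U` satisfies `q_y = q_v`, then `(q·y) ∩ U = n_q(q_v)·y`. -/
theorem orbit_inter_fixed_space_eq_normalizer_orbit
    {k L V : Type*} [Field k] [LieRing L] [LieAlgebra k L]
    [AddCommGroup V] [Module k V] [LieRingModule L V] [LieModule k L V]
    (v y : V)
    (hyU : ∀ z : L, ⁅z, v⁆ = 0 → ⁅z, y⁆ = 0)
    (heq : ∀ z : L, ⁅z, y⁆ = 0 ↔ ⁅z, v⁆ = 0) :
    {w : V | (∃ z : L, ⁅z, y⁆ = w) ∧ ∀ u : L, ⁅u, v⁆ = 0 → ⁅u, w⁆ = 0} =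
      {w : V | ∃ z : L, (∀ u : L, ⁅u, v⁆ = 0 → ⁅⁅z, u⁆, v⁆ = 0) ∧ ⁅z, y⁆ = w} := by
  ext w
  constructor
  · rintro ⟨⟨z, rfl⟩, hU⟩
    refine ⟨z, fun u hu => ?_, rfl⟩
    rw [← heq]
    have : ⁅⁅z, u⁆, y⁆ = ⁅z, ⁅u, y⁆⁆ - ⁅u, ⁅z, y⁆⁆ := by
      rw [lie_lie]
    rw [this, hyU u hu, hU u hu, lie_zero, sub_zero]
  · rintro ⟨z, hn, rfl⟩
    refine ⟨⟨z, rfl⟩, fun u hu => ?_⟩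
    have h1 : ⁅u, ⁅z, y⁆⁆ = ⁅⁅u, z⁆, y⁆ + ⁅z, ⁅u, y⁆⁆ := by rw [lie_lie]; abel
    rw [h1, hyU u hu, lie_zero, add_zero]
    have : ⁅⁅u, z⁆, v⁆ = 0 := by
      rw [(lie_skew u z).symm, neg_lie, hn u hu, neg_zero]
    exact hyU _ this
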